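/- Let f be a polynomial on ℝ^4 of degree at most t. Then the function I_π f on S^2 defined by fiberwise averaging f over Hopf fibers is the restriction to S^2 of a polynomial on ℝ^3 of degree at most ⌊t/2⌋. Moreover, the map I_π surjects P_t(S^3) onto P_{⌊t/2⌋}(S^2). -/

import Mathlib

open Real MvPolynomial

/-- A point of `ℝ⁴ ≅ ℂ²` multiplied componentwise by `e^{iθ}` (rotation along the Hopf
fiber through it). -/
noncomputable def hopfRot (x : Fin 4 → ℝ) (θ : ℝ) : Fin 4 → ℝ :=
  ![x 0 * Real.cos θ - x 1 * Real.sin θ, x 0 * Real.sin θ + x 1 * Real.cos θ,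
    x 2 * Real.cos θ - x 3 * Real.sin θ, x 2 * Real.sin θ + x 3 * Real.cos θ]

/-- The Hopf map `ℝ⁴ ≅ ℂ² → ℝ³ ≅ ℝ × ℂ`, `(a,b) ↦ (|a|²-|b|², 2·a·conj b)`. -/
def hopfMapE (x : Fin 4 → ℝ) : Fin 3 → ℝ :=
  ![x 0 ^ 2 + x 1 ^ 2 - x 2 ^ 2 - x 3 ^ 2,
    2 * (x 0 * x 2 + x 1 * x 3), 2 * (x 1 * x 2 - x 0 * x 3)]

section AuxHopf
open Complex


noncomputable def ca (x : Fin 4 → ℝ) : ℂ := x 0 + x 1 * Complex.I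
noncomputable def cb (x : Fin 4 → ℝ) : ℂ := x 2 + x 3 * Complex.I

inductive Good : ℕ → ℤ → ((Fin 4 → ℝ) → ℂ) → Prop
  | mon (k p q r s : ℕ) (hk : p + q + r + s ≤ k) :
      Good k ((p:ℤ) + r - q - s)
        (fun x => ca x ^ p * (starRingEnd ℂ) (ca x) ^ q * cb x ^ r * (starRingEnd ℂ) (cb x) ^ s)
  | zero (k : ℕ) (n : ℤ) : Good k n 0
  | add {k n c₁ c₂} : Good k n c₁ → Good k n c₂ → Good k n (c₁ + c₂)
  | smul {k n c} (r : ℂ) : Good k n c → Good k n (r • c)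

lemma Good.mono {k k' : ℕ} {n : ℤ} {c} (h : Good k n c) (hk : k ≤ k') : Good k' n c := by
  induction h with
  | mon p q r s h => exact Good.mon _ _ _ _ _ (h.trans hk)
  | zero _ => exact Good.zero _ _
  | add _ _ ih1 ih2 => exact Good.add ih1 ih2
  | smul r _ ih => exact Good.smul r ih

lemma Good.mul_basic {k : ℕ} {n : ℤ} {c} (p q r s : ℕ) (h : Good k n c) :
    Good (k + (p + q + r + s)) (n + ((p:ℤ) + r - q - s))
      (fun x => (ca x ^ p * (starRingEnd ℂ) (ca x) ^ q * cb x ^ r * (starRingEnd ℂ) (cb x) ^ s)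
        * c x) := by
  induction h with
  | mon p' q' r' s' h =>
      have e : ((p':ℤ) + r' - q' - s') + ((p:ℤ) + r - q - s)
          = ((p + p' : ℕ) : ℤ) + ((r + r' : ℕ) : ℤ) - ((q + q' : ℕ) : ℤ) - ((s + s' : ℕ) : ℤ) := by
        push_cast; ring
      have e2 : (fun x => (ca x ^ p * (starRingEnd ℂ) (ca x) ^ q * cb x ^ r
            * (starRingEnd ℂ) (cb x) ^ s)
          * (ca x ^ p' * (starRingEnd ℂ) (ca x) ^ q' * cb x ^ r' * (starRingEnd ℂ) (cb x) ^ s'))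
          = fun x => ca x ^ (p + p') * (starRingEnd ℂ) (ca x) ^ (q + q') * cb x ^ (r + r')
            * (starRingEnd ℂ) (cb x) ^ (s + s') := by
        funext x; simp only [pow_add]; ring
      rw [e, e2]
      exact Good.mon _ _ _ _ _ (by omega)
  | zero =>
      convert Good.zero (k + (p + q + r + s)) _ using 1
      funext x; simp
  | add h1 h2 ih1 ih2 =>
      have := Good.add ih1 ih2
      convert this using 1
      funext x; simp [mul_add]
  | smul r h ih =>
      have := Good.smul r ih
      convert this using 1
      funext x; simp [Pi.smul_apply, smul_eq_mul]; ring



noncomputable def ee (n : ℤ) (θ : ℝ) : ℂ := Complex.exp (n * θ * Complex.I)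

lemma ee_zero (θ : ℝ) : ee 0 θ = 1 := by simp [ee]

lemma ee_mul (m n : ℤ) (θ : ℝ) : ee m θ * ee n θ = ee (m + n) θ := by
  rw [ee, ee, ee, ← Complex.exp_add]
  congr 1
  push_cast
  ring

lemma integral_ee (n : ℤ) : (∫ θ in (0:ℝ)..(2*π), ee n θ) = if n = 0 then (2*π:ℂ) else 0 := by
  rcases eq_or_ne n 0 with h | h
  · simp [h, ee]
  · have h1 : ∀ θ : ℝ, ee n θ = Complex.exp ((n * Complex.I) * θ) := by
      intro θ; rw [ee]; ring_nf
    simp only [h1]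
    rw [integral_exp_mul_complex (by simp [h, Complex.I_ne_zero])]
    have h2 : (n : ℂ) * Complex.I * (2*π:ℝ) = n * (2 * π * Complex.I) := by push_cast; ring
    rw [h2, Complex.exp_int_mul_two_pi_mul_I]
    simp [h]

noncomputable def Av : Fin 4 → (Fin 4 → ℝ) → ℂ :=
  ![fun x => ca x / 2, fun x => -Complex.I * ca x / 2,
    fun x => cb x / 2, fun x => -Complex.I * cb x / 2]

noncomputable def Bv : Fin 4 → (Fin 4 → ℝ) → ℂ :=
  ![fun x => (starRingEnd ℂ) (ca x) / 2, fun x => Complex.I * (starRingEnd ℂ) (ca x) / 2,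
    fun x => (starRingEnd ℂ) (cb x) / 2, fun x => Complex.I * (starRingEnd ℂ) (cb x) / 2]

lemma hopfRot_coord (x : Fin 4 → ℝ) (θ : ℝ) (i : Fin 4) :
    ((hopfRot x θ i : ℝ) : ℂ) = Av i x * ee 1 θ + Bv i x * ee (-1) θ := by
  have e1 : ee 1 θ = (Real.cos θ : ℂ) + (Real.sin θ : ℂ) * Complex.I := by
    rw [ee]; push_cast
    rw [one_mul, Complex.exp_mul_I, ← Complex.ofReal_cos, ← Complex.ofReal_sin]
  have e2 : ee (-1) θ = (Real.cos θ : ℂ) - (Real.sin θ : ℂ) * Complex.I := by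
    rw [ee]; push_cast
    have : (-1 : ℂ) * θ * Complex.I = -θ * Complex.I := by ring
    rw [this, Complex.exp_mul_I, Complex.cos_neg, Complex.sin_neg,
      ← Complex.ofReal_cos, ← Complex.ofReal_sin]
    ring
  fin_cases i <;>
    simp only [hopfRot, Av, Bv, ca, cb, e1, e2, Matrix.cons_val_zero, Matrix.cons_val_one,
      Matrix.head_cons, Matrix.cons_val_two, Matrix.tail_cons, Matrix.cons_val_three] <;>
    simp only [Complex.ext_iff, map_add, map_mul, Complex.conj_ofReal, Complex.conj_I] <;>
    push_cast <;>
    constructor <;> simp <;> ring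
-- HasExp machinery
def HasExp (k : ℕ) (F : (Fin 4 → ℝ) → ℝ → ℂ) : Prop :=
  ∃ c : ℤ → (Fin 4 → ℝ) → ℂ,
    (∀ n, Good k n (c n)) ∧ (∀ n, n ∉ Finset.Icc (-(k:ℤ)) (k:ℤ) → c n = 0) ∧
    (∀ x θ, F x θ = ∑ n ∈ Finset.Icc (-(k:ℤ)) (k:ℤ), c n x * ee n θ)

lemma HasExp.congr {k F G} (h : HasExp k F) (hFG : ∀ x θ, F x θ = G x θ) : HasExp k G := by
  obtain ⟨c, h1, h2, h3⟩ := h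
  exact ⟨c, h1, h2, fun x θ => (hFG x θ) ▸ h3 x θ⟩

lemma HasExp.mono {k k' F} (h : HasExp k F) (hk : k ≤ k') : HasExp k' F := by
  obtain ⟨c, h1, h2, h3⟩ := h
  refine ⟨c, fun n => (h1 n).mono hk, fun n hn => h2 n ?_, fun x θ => ?_⟩
  · simp only [Finset.mem_Icc] at hn ⊢; omega
  · rw [h3 x θ]
    apply Finset.sum_subset
    · apply Finset.Icc_subset_Icc <;> omega
    · intro n _ hn
      rw [h2 n hn]; simp

lemma HasExp.add {k F G} (hF : HasExp k F) (hG : HasExp k G) :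
    HasExp k (fun x θ => F x θ + G x θ) := by
  obtain ⟨c, h1, h2, h3⟩ := hF
  obtain ⟨d, g1, g2, g3⟩ := hG
  refine ⟨fun n => c n + d n, fun n => (h1 n).add (g1 n), fun n hn => ?_, fun x θ => ?_⟩
  · show c n + d n = 0
    rw [h2 n hn, g2 n hn]; simp
  · show F x θ + G x θ = _
    rw [h3 x θ, g3 x θ, ← Finset.sum_add_distrib]
    exact Finset.sum_congr rfl fun n _ => by simp [add_mul]

lemma HasExp.const (r : ℝ) : HasExp 0 (fun _ _ => (r : ℂ)) := by
  classical
  refine ⟨fun n => if n = 0 then (fun _ => (r:ℂ)) else 0, fun n => ?_, fun n hn => ?_, fun x θ => ?_⟩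
  · rcases eq_or_ne n 0 with h | h
    · subst h
      simp only [if_pos rfl]
      have := Good.smul (k := 0) (n := ((0:ℤ) + 0 - 0 - 0)) (r:ℂ) (Good.mon 0 0 0 0 0 (by omega))
      convert this using 1
      · simp
      funext x; simp
    · simpa [h] using Good.zero 0 n
  · have hne : n ≠ 0 := by simp only [Finset.mem_Icc] at hn; omega
    simp [hne]
  · simp [ee_zero]

lemma shift_sum (k : ℕ) (d : ℤ) (hd : d = 1 ∨ d = -1) (g : ℤ → ℂ)
    (h0 : ∀ n, n ∉ Finset.Icc (-(k:ℤ)) (k:ℤ) → g n = 0) (u : ℤ → ℂ) :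
    ∑ n ∈ Finset.Icc (-(k:ℤ)-1) ((k:ℤ)+1), g (n - d) * u n
      = ∑ n ∈ Finset.Icc (-(k:ℤ)) (k:ℤ), g n * u (n + d) := by
  have h1 : ∑ n ∈ Finset.Icc (-(k:ℤ)-1) ((k:ℤ)+1), g (n - d) * u n
      = ∑ n ∈ Finset.Icc (-(k:ℤ)+d) ((k:ℤ)+d), g (n - d) * u n := by
    symm
    apply Finset.sum_subset
    · apply Finset.Icc_subset_Icc <;> omega
    · intro n hn hn'
      rw [h0 (n - d) (by simp only [Finset.mem_Icc] at hn hn' ⊢; omega)]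
      simp
  rw [h1, ← Finset.map_add_right_Icc _ _ d, Finset.sum_map]
  simp only [addRightEmbedding_apply, add_sub_cancel_right]
lemma good_mul_gen {k n c} (g : (Fin 4 → ℝ) → ℂ) (w : ℂ) (p q r s : ℕ) (k' : ℕ) (n' : ℤ)
    (hg : ∀ x, g x = w * (ca x ^ p * (starRingEnd ℂ) (ca x) ^ q * cb x ^ r
      * (starRingEnd ℂ) (cb x) ^ s))
    (hk' : k' = k + (p + q + r + s)) (hn' : n' = n + ((p:ℤ) + r - q - s)) (h : Good k n c) :
    Good k' n' (fun x => g x * c x) := by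
  subst hk' hn'
  have := Good.smul w (h.mul_basic p q r s)
  convert this using 1
  funext x
  simp only [Pi.smul_apply, smul_eq_mul, hg x]
  ring

lemma Good.mul_Av (i : Fin 4) {k n c} (h : Good k n c) :
    Good (k + 1) (n + 1) (fun x => Av i x * c x) := by
  fin_cases i
  · exact good_mul_gen _ ((1:ℂ)/2) 1 0 0 0 _ _
      (fun x => by simp [Av]; ring) (by ring) (by push_cast; ring) h
  · exact good_mul_gen _ (-Complex.I/2) 1 0 0 0 _ _
      (fun x => by simp [Av]; ring) (by ring) (by push_cast; ring) h
  · exact good_mul_gen _ ((1:ℂ)/2) 0 0 1 0 _ _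
      (fun x => by simp [Av]; ring) (by ring) (by push_cast; ring) h
  · exact good_mul_gen _ (-Complex.I/2) 0 0 1 0 _ _
      (fun x => by simp [Av]; ring) (by ring) (by push_cast; ring) h

lemma Good.mul_Bv (i : Fin 4) {k n c} (h : Good k n c) :
    Good (k + 1) (n - 1) (fun x => Bv i x * c x) := by
  fin_cases i
  · exact good_mul_gen _ ((1:ℂ)/2) 0 1 0 0 _ _
      (fun x => by simp [Bv]; ring) (by ring) (by push_cast; ring) h
  · exact good_mul_gen _ (Complex.I/2) 0 1 0 0 _ _
      (fun x => by simp [Bv]; ring) (by ring) (by push_cast; ring) h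
  · exact good_mul_gen _ ((1:ℂ)/2) 0 0 0 1 _ _
      (fun x => by simp [Bv]; ring) (by ring) (by push_cast; ring) h
  · exact good_mul_gen _ (Complex.I/2) 0 0 0 1 _ _
      (fun x => by simp [Bv]; ring) (by ring) (by push_cast; ring) h
lemma HasExp.mulCoord {k F} (i : Fin 4) (h : HasExp k F) :
    HasExp (k + 1) (fun x θ => F x θ * ((hopfRot x θ i : ℝ) : ℂ)) := by
  obtain ⟨c, h1, h2, h3⟩ := h
  refine ⟨fun n x => Av i x * c (n - 1) x + Bv i x * c (n + 1) x, fun n => ?_, fun n hn => ?_,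
    fun x θ => ?_⟩
  · have hA := (h1 (n - 1)).mul_Av i
    have hB := (h1 (n + 1)).mul_Bv i
    rw [sub_add_cancel] at hA
    rw [add_sub_cancel_right] at hB
    exact hA.add hB
  · have e1 : c (n - 1) = 0 := h2 _ (by simp only [Finset.mem_Icc] at hn ⊢; push_cast at hn ⊢; omega)
    have e2 : c (n + 1) = 0 := h2 _ (by simp only [Finset.mem_Icc] at hn ⊢; push_cast at hn ⊢; omega)
    funext x; simp [e1, e2]
  · show F x θ * _ = _
    rw [h3 x θ, hopfRot_coord x θ i, Finset.sum_mul]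
    have step : ∀ n : ℤ, c n x * ee n θ * (Av i x * ee 1 θ + Bv i x * ee (-1) θ)
        = Av i x * c n x * ee (n + 1) θ + Bv i x * c n x * ee (n + (-1)) θ := by
      intro n
      rw [← ee_mul n 1 θ, ← ee_mul n (-1) θ]
      ring
    simp only [step]
    rw [Finset.sum_add_distrib]
    have hIcc : Finset.Icc (-((k:ℤ)+1)) ((k:ℤ)+1) = Finset.Icc (-(k:ℤ)-1) ((k:ℤ)+1) := by
      congr 1; ring
    have s1 : ∑ n ∈ Finset.Icc (-(k:ℤ)) (k:ℤ), Av i x * c n x * ee (n + 1) θ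
        = ∑ n ∈ Finset.Icc (-(k:ℤ)-1) ((k:ℤ)+1), Av i x * c (n - 1) x * ee n θ := by
      rw [shift_sum k 1 (Or.inl rfl) (fun n => Av i x * c n x)
        (fun n hn => by show _ * c n x = 0; rw [h2 n hn]; simp) (fun n => ee n θ)]
    have s2 : ∑ n ∈ Finset.Icc (-(k:ℤ)) (k:ℤ), Bv i x * c n x * ee (n + (-1)) θ
        = ∑ n ∈ Finset.Icc (-(k:ℤ)-1) ((k:ℤ)+1), Bv i x * c (n - (-1)) x * ee n θ := by
      rw [shift_sum k (-1) (Or.inr rfl) (fun n => Bv i x * c n x)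
        (fun n hn => by show _ * c n x = 0; rw [h2 n hn]; simp) (fun n => ee n θ)]
    rw [s1, s2]
    push_cast
    rw [hIcc, ← Finset.sum_add_distrib]
    apply Finset.sum_congr rfl
    intro n _
    have : n - (-1) = n + 1 := by ring
    rw [this]
    ring

lemma HasExp.mulCoordPow {k F} (i : Fin 4) (m : ℕ) (h : HasExp k F) :
    HasExp (k + m) (fun x θ => F x θ * ((hopfRot x θ i ^ m : ℝ) : ℂ)) := by
  induction m with
  | zero => exact h.congr (fun x θ => by simp)
  | succ m ih =>
      have h3 : HasExp (k + m + 1) (fun x θ => F x θ * ((hopfRot x θ i ^ (m+1) : ℝ) : ℂ)) :=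
        (ih.mulCoord i).congr (fun x θ => by push_cast [pow_succ]; ring)
      exact h3.mono (by omega)
lemma hasExp_monomial (α : Fin 4 →₀ ℕ) (cc : ℝ) :
    HasExp (α 0 + α 1 + α 2 + α 3)
      (fun x θ => ((eval (hopfRot x θ) (monomial α cc) : ℝ) : ℂ)) := by
  have h0 := HasExp.const cc
  have h1 := ((((h0.mulCoordPow 0 (α 0)).mulCoordPow 1 (α 1)).mulCoordPow 2 (α 2)).mulCoordPow
    3 (α 3))
  have h2 : 0 + α 0 + α 1 + α 2 + α 3 = α 0 + α 1 + α 2 + α 3 := by omega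
  rw [h2] at h1
  refine h1.congr (fun x θ => ?_)
  rw [eval_monomial]
  rw [Finsupp.prod_fintype _ _ (fun i => pow_zero _)]
  rw [Fin.prod_univ_four]
  push_cast
  ring

lemma hasExp_sum {ι : Type*} (s : Finset ι) (k : ℕ) (F : ι → (Fin 4 → ℝ) → ℝ → ℂ)
    (h : ∀ j ∈ s, HasExp k (F j)) :
    HasExp k (fun x θ => ∑ j ∈ s, F j x θ) := by
  classical
  induction s using Finset.induction_on with
  | empty =>
      have := (HasExp.const 0).mono (Nat.zero_le k)
      exact this.congr (fun x θ => by simp)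
  | insert a s' hnotmem ih =>
      have hA := h a (Finset.mem_insert_self a s')
      have hS := ih (fun j hj => h j (Finset.mem_insert_of_mem hj))
      exact (hA.add hS).congr (fun x θ => (Finset.sum_insert (f := fun j => F j x θ) hnotmem).symm)

lemma hasExp_eval (f : MvPolynomial (Fin 4) ℝ) :
    HasExp f.totalDegree (fun x θ => ((eval (hopfRot x θ) f : ℝ) : ℂ)) := by
  have key := hasExp_sum f.support f.totalDegree
    (fun α => fun x θ => ((eval (hopfRot x θ) (monomial α (f.coeff α)) : ℝ) : ℂ))
    (fun α hα => by
      refine (hasExp_monomial α _).mono ?_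
      have h1 := MvPolynomial.le_totalDegree hα
      have h2 : α.sum (fun _ e => e) = α 0 + α 1 + α 2 + α 3 := by
        rw [Finsupp.sum_fintype _ _ (fun i => rfl), Fin.sum_univ_four]
      omega)
  refine key.congr (fun x θ => ?_)
  show _ = ((eval (hopfRot x θ) f : ℝ) : ℂ)
  conv_rhs => rw [← f.support_sum_monomial_coeff]
  rw [map_sum]
  push_cast
  rfl

lemma ca_mul_conj (x : Fin 4 → ℝ) :
    ca x * (starRingEnd ℂ) (ca x) = ((x 0 ^ 2 + x 1 ^ 2 : ℝ) : ℂ) := by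
  apply Complex.ext <;> simp [ca, cb, Complex.mul_re, Complex.mul_im, ← Complex.ofReal_pow] <;> ring

lemma cb_mul_conj (x : Fin 4 → ℝ) :
    cb x * (starRingEnd ℂ) (cb x) = ((x 2 ^ 2 + x 3 ^ 2 : ℝ) : ℂ) := by
  apply Complex.ext <;> simp [ca, cb, Complex.mul_re, Complex.mul_im, ← Complex.ofReal_pow] <;> ring

lemma ca_mul_conj_cb (x : Fin 4 → ℝ) :
    ca x * (starRingEnd ℂ) (cb x)
      = ((x 0 * x 2 + x 1 * x 3 : ℝ) : ℂ) + ((x 1 * x 2 - x 0 * x 3 : ℝ) : ℂ) * Complex.I := by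
  apply Complex.ext <;> simp [ca, cb, Complex.mul_re, Complex.mul_im, ← Complex.ofReal_pow] <;> ring

lemma conj_ca_mul_cb (x : Fin 4 → ℝ) :
    (starRingEnd ℂ) (ca x) * cb x
      = ((x 0 * x 2 + x 1 * x 3 : ℝ) : ℂ) - ((x 1 * x 2 - x 0 * x 3 : ℝ) : ℂ) * Complex.I := by
  apply Complex.ext <;> simp [ca, cb, Complex.mul_re, Complex.mul_im, ← Complex.ofReal_pow] <;> ring

noncomputable def base1 : MvPolynomial (Fin 3) ℂ := C (1/2) * (1 + X 0)
noncomputable def base2 : MvPolynomial (Fin 3) ℂ := C (1/2) * (1 + C (-1) * X 0)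
noncomputable def base3 : MvPolynomial (Fin 3) ℂ := C (1/2) * (X 1 + C Complex.I * X 2)
noncomputable def base4 : MvPolynomial (Fin 3) ℂ := C (1/2) * (X 1 + C (-Complex.I) * X 2)

lemma deg_C_mul (a : ℂ) (p : MvPolynomial (Fin 3) ℂ) :
    (C a * p).totalDegree ≤ p.totalDegree :=
  le_trans (totalDegree_mul _ _) (by simp [totalDegree_C])

lemma base1_deg : base1.totalDegree ≤ 1 := by
  refine le_trans (deg_C_mul _ _) (le_trans (totalDegree_add _ _) ?_)
  simp [totalDegree_one, totalDegree_X]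

lemma base2_deg : base2.totalDegree ≤ 1 := by
  refine le_trans (deg_C_mul _ _) (le_trans (totalDegree_add _ _) ?_)
  simp only [totalDegree_one, max_le_iff]
  exact ⟨by omega, le_trans (deg_C_mul _ _) (le_of_eq (totalDegree_X _))⟩

lemma base3_deg : base3.totalDegree ≤ 1 := by
  refine le_trans (deg_C_mul _ _) (le_trans (totalDegree_add _ _) ?_)
  simp only [max_le_iff]
  exact ⟨le_of_eq (totalDegree_X _), le_trans (deg_C_mul _ _) (le_of_eq (totalDegree_X _))⟩

lemma base4_deg : base4.totalDegree ≤ 1 := by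
  refine le_trans (deg_C_mul _ _) (le_trans (totalDegree_add _ _) ?_)
  simp only [max_le_iff]
  exact ⟨le_of_eq (totalDegree_X _), le_trans (deg_C_mul _ _) (le_of_eq (totalDegree_X _))⟩

section SphereEval
variable {x : Fin 4 → ℝ} (hx : x 0 ^ 2 + x 1 ^ 2 + x 2 ^ 2 + x 3 ^ 2 = 1)

lemma eval_base1 (hx : x 0 ^ 2 + x 1 ^ 2 + x 2 ^ 2 + x 3 ^ 2 = 1) :
    eval (fun i => ((hopfMapE x i : ℝ) : ℂ)) base1 = ca x * (starRingEnd ℂ) (ca x) := by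
  rw [ca_mul_conj]
  have h0 : hopfMapE x 0 = x 0 ^ 2 + x 1 ^ 2 - x 2 ^ 2 - x 3 ^ 2 := by simp [hopfMapE]
  have : x 0 ^ 2 + x 1 ^ 2 = 1 / 2 * (1 + hopfMapE x 0) := by rw [h0]; linarith
  rw [this]
  simp [base1]

lemma eval_base2 (hx : x 0 ^ 2 + x 1 ^ 2 + x 2 ^ 2 + x 3 ^ 2 = 1) :
    eval (fun i => ((hopfMapE x i : ℝ) : ℂ)) base2 = cb x * (starRingEnd ℂ) (cb x) := by
  rw [cb_mul_conj]
  have h0 : hopfMapE x 0 = x 0 ^ 2 + x 1 ^ 2 - x 2 ^ 2 - x 3 ^ 2 := by simp [hopfMapE]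
  have : x 2 ^ 2 + x 3 ^ 2 = 1 / 2 * (1 + (-1) * hopfMapE x 0) := by rw [h0]; linarith
  rw [this]
  simp [base2]

lemma eval_base3 :
    eval (fun i => ((hopfMapE x i : ℝ) : ℂ)) base3 = ca x * (starRingEnd ℂ) (cb x) := by
  rw [ca_mul_conj_cb]
  have h1 : hopfMapE x 1 = 2 * (x 0 * x 2 + x 1 * x 3) := by simp [hopfMapE]
  have h2 : hopfMapE x 2 = 2 * (x 1 * x 2 - x 0 * x 3) := by simp [hopfMapE]
  simp [base3, h1, h2]
  ring

lemma eval_base4 :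
    eval (fun i => ((hopfMapE x i : ℝ) : ℂ)) base4 = (starRingEnd ℂ) (ca x) * cb x := by
  rw [conj_ca_mul_cb]
  have h1 : hopfMapE x 1 = 2 * (x 0 * x 2 + x 1 * x 3) := by simp [hopfMapE]
  have h2 : hopfMapE x 2 = 2 * (x 1 * x 2 - x 0 * x 3) := by simp [hopfMapE]
  simp [base4, h1, h2]
  ring

end SphereEval
lemma good_rep {k : ℕ} {n : ℤ} {c} (h : Good k n c) (hn : n = 0) :
    ∃ Q : MvPolynomial (Fin 3) ℂ, Q.totalDegree ≤ k / 2 ∧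
      ∀ x : Fin 4 → ℝ, x 0 ^ 2 + x 1 ^ 2 + x 2 ^ 2 + x 3 ^ 2 = 1 →
        c x = eval (fun i => ((hopfMapE x i : ℝ) : ℂ)) Q := by
  induction h with
  | mon p q r s hk =>
      have hbal : p + r = q + s := by omega
      rcases le_or_gt q p with hq | hq
      · -- p ≥ q : use base1^q * base2^r * base3^(p-q)
        refine ⟨base1 ^ q * base2 ^ r * base3 ^ (p - q), ?_, ?_⟩
        · have d1 := totalDegree_pow base1 q
          have d2 := totalDegree_pow base2 r
          have d3 := totalDegree_pow base3 (p - q)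
          have := le_trans (totalDegree_mul (base1 ^ q * base2 ^ r) (base3 ^ (p - q)))
            (add_le_add (le_trans (totalDegree_mul (base1 ^ q) (base2 ^ r))
              (add_le_add (le_trans d1 (Nat.mul_le_mul_left q base1_deg))
                (le_trans d2 (Nat.mul_le_mul_left r base2_deg))))
              (le_trans d3 (Nat.mul_le_mul_left (p - q) base3_deg)))
          refine le_trans this ?_
          omega
        · intro x hx
          rw [map_mul, map_mul, map_pow, map_pow, map_pow,
            eval_base1 hx, eval_base2 hx, eval_base3]
          have hp : p = q + (p - q) := by omega
          have hs : s = r + (p - q) := by omega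
          rw [hp, hs]
          simp only [pow_add]
          rw [mul_pow, mul_pow, mul_pow]
          simp only [Nat.add_sub_cancel_left]
          ring
      · -- p < q : use base1^p * base2^s * base4^(q-p)
        refine ⟨base1 ^ p * base2 ^ s * base4 ^ (q - p), ?_, ?_⟩
        · have d1 := totalDegree_pow base1 p
          have d2 := totalDegree_pow base2 s
          have d3 := totalDegree_pow base4 (q - p)
          have := le_trans (totalDegree_mul (base1 ^ p * base2 ^ s) (base4 ^ (q - p)))
            (add_le_add (le_trans (totalDegree_mul (base1 ^ p) (base2 ^ s))
              (add_le_add (le_trans d1 (Nat.mul_le_mul_left p base1_deg))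
                (le_trans d2 (Nat.mul_le_mul_left s base2_deg))))
              (le_trans d3 (Nat.mul_le_mul_left (q - p) base4_deg)))
          refine le_trans this ?_
          omega
        · intro x hx
          rw [map_mul, map_mul, map_pow, map_pow, map_pow,
            eval_base1 hx, eval_base2 hx, eval_base4]
          have hqe : q = p + (q - p) := by omega
          have hr : r = s + (q - p) := by omega
          rw [hqe, hr]
          simp only [pow_add]
          rw [mul_pow, mul_pow, mul_pow]
          simp only [Nat.add_sub_cancel_left]
          ring
  | zero => exact ⟨0, by simp, by simp⟩
  | add h1 h2 ih1 ih2 =>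
      obtain ⟨Q1, hd1, he1⟩ := ih1 hn
      obtain ⟨Q2, hd2, he2⟩ := ih2 hn
      refine ⟨Q1 + Q2, le_trans (totalDegree_add _ _) (by omega), fun x hx => ?_⟩
      rw [map_add, ← he1 x hx, ← he2 x hx]
      rfl
  | smul r h ih =>
      obtain ⟨Q, hd, he⟩ := ih hn
      refine ⟨C r * Q, le_trans (deg_C_mul _ _) hd, fun x hx => ?_⟩
      rw [map_mul, eval_C, ← he x hx]
      rfl
lemma re_poly (Q : MvPolynomial (Fin 3) ℂ) :
    ∃ q : MvPolynomial (Fin 3) ℝ, q.totalDegree ≤ Q.totalDegree ∧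
      ∀ y : Fin 3 → ℝ, eval y q = (eval (fun i => ((y i : ℝ) : ℂ)) Q).re := by
  classical
  refine ⟨∑ α ∈ Q.support, monomial α (Q.coeff α).re, ?_, fun y => ?_⟩
  · refine le_trans (totalDegree_finset_sum _ _) (Finset.sup_le fun α hα => ?_)
    exact le_trans (totalDegree_monomial_le _ _) (MvPolynomial.le_totalDegree hα)
  · rw [eval_eq (fun i => ((y i : ℝ) : ℂ)) Q]
    rw [map_sum]
    rw [Complex.re_sum]
    apply Finset.sum_congr rfl
    intro α _
    rw [eval_monomial]
    have hprod : ∏ i ∈ α.support, ((y i : ℝ) : ℂ) ^ α i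
        = (((∏ i ∈ α.support, y i ^ α i : ℝ)) : ℂ) := by
      push_cast
      rfl
    rw [hprod, Complex.mul_re, Complex.ofReal_re, Complex.ofReal_im, mul_zero, sub_zero]
    simp [Finsupp.prod]

lemma integral_expansion (k : ℕ) (c : ℤ → (Fin 4 → ℝ) → ℂ) (x : Fin 4 → ℝ) :
    (∫ θ in (0:ℝ)..(2*π), ∑ n ∈ Finset.Icc (-(k:ℤ)) (k:ℤ), c n x * ee n θ)
      = 2 * (π:ℝ) * c 0 x := by
  have hcont : ∀ n : ℤ, Continuous fun θ : ℝ => ee n θ := by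
    intro n
    unfold ee
    fun_prop
  rw [intervalIntegral.integral_finset_sum (f := fun n θ => c n x * ee n θ)
    (fun n _ => ((continuous_const.mul (hcont n)).intervalIntegrable _ _))]
  simp only [intervalIntegral.integral_const_mul, integral_ee, mul_ite, mul_zero]
  rw [Finset.sum_ite_eq' (Finset.Icc (-(k:ℤ)) (k:ℤ)) 0 (fun n => c n x * (2*π:ℂ))]
  rw [if_pos (by simp)]
  push_cast
  ring
noncomputable def hopfPoly : Fin 3 → MvPolynomial (Fin 4) ℝ :=
  ![X 0 ^ 2 + X 1 ^ 2 + C (-1) * X 2 ^ 2 + C (-1) * X 3 ^ 2,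
    C 2 * (X 0 * X 2 + X 1 * X 3), C 2 * (X 1 * X 2 + C (-1) * (X 0 * X 3))]

lemma hopfPoly_deg (i : Fin 3) : (hopfPoly i).totalDegree ≤ 2 := by
  have hX : ∀ j : Fin 4, (X j ^ 2 : MvPolynomial (Fin 4) ℝ).totalDegree ≤ 2 := fun j =>
    le_trans (totalDegree_pow _ _) (by simp [totalDegree_X])
  have hXX : ∀ j j' : Fin 4, (X j * X j' : MvPolynomial (Fin 4) ℝ).totalDegree ≤ 2 := fun j j' =>
    le_trans (totalDegree_mul _ _) (by simp [totalDegree_X])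
  have hC : ∀ (a : ℝ) (p : MvPolynomial (Fin 4) ℝ),
      (C a * p).totalDegree ≤ p.totalDegree := fun a p =>
    le_trans (totalDegree_mul _ _) (by simp [totalDegree_C])
  fin_cases i
  · show (X 0 ^ 2 + X 1 ^ 2 + C (-1) * X 2 ^ 2 + C (-1) * X 3 ^ 2 :
      MvPolynomial (Fin 4) ℝ).totalDegree ≤ 2
    refine le_trans (totalDegree_add _ _) (max_le (le_trans (totalDegree_add _ _)
      (max_le (le_trans (totalDegree_add _ _) (max_le (hX 0) (hX 1)))
        (le_trans (hC _ _) (hX 2)))) (le_trans (hC _ _) (hX 3)))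
  · show (C 2 * (X 0 * X 2 + X 1 * X 3) : MvPolynomial (Fin 4) ℝ).totalDegree ≤ 2
    exact le_trans (hC _ _) (le_trans (totalDegree_add _ _) (max_le (hXX 0 2) (hXX 1 3)))
  · show (C 2 * (X 1 * X 2 + C (-1) * (X 0 * X 3)) : MvPolynomial (Fin 4) ℝ).totalDegree ≤ 2
    exact le_trans (hC _ _) (le_trans (totalDegree_add _ _)
      (max_le (hXX 1 2) (le_trans (hC _ _) (hXX 0 3))))

lemma eval_hopfPoly (x : Fin 4 → ℝ) (i : Fin 3) : eval x (hopfPoly i) = hopfMapE x i := by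
  fin_cases i <;> simp [hopfPoly, hopfMapE] <;> ring

lemma hopfMapE_rot (x : Fin 4 → ℝ) (θ : ℝ) : hopfMapE (hopfRot x θ) = hopfMapE x := by
  have h := Real.sin_sq_add_cos_sq θ
  have h0 : hopfMapE (hopfRot x θ) 0 = hopfMapE x 0 := by
    show (x 0 * Real.cos θ - x 1 * Real.sin θ) ^ 2 + (x 0 * Real.sin θ + x 1 * Real.cos θ) ^ 2
        - (x 2 * Real.cos θ - x 3 * Real.sin θ) ^ 2 - (x 2 * Real.sin θ + x 3 * Real.cos θ) ^ 2
      = x 0 ^ 2 + x 1 ^ 2 - x 2 ^ 2 - x 3 ^ 2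
    linear_combination (x 0 ^ 2 + x 1 ^ 2 - x 2 ^ 2 - x 3 ^ 2) * h
  have h1 : hopfMapE (hopfRot x θ) 1 = hopfMapE x 1 := by
    show 2 * ((x 0 * Real.cos θ - x 1 * Real.sin θ) * (x 2 * Real.cos θ - x 3 * Real.sin θ)
        + (x 0 * Real.sin θ + x 1 * Real.cos θ) * (x 2 * Real.sin θ + x 3 * Real.cos θ))
      = 2 * (x 0 * x 2 + x 1 * x 3)
    linear_combination (2 * (x 0 * x 2 + x 1 * x 3)) * h
  have h2 : hopfMapE (hopfRot x θ) 2 = hopfMapE x 2 := by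
    show 2 * ((x 0 * Real.sin θ + x 1 * Real.cos θ) * (x 2 * Real.cos θ - x 3 * Real.sin θ)
        - (x 0 * Real.cos θ - x 1 * Real.sin θ) * (x 2 * Real.sin θ + x 3 * Real.cos θ))
      = 2 * (x 1 * x 2 - x 0 * x 3)
    linear_combination (2 * (x 1 * x 2 - x 0 * x 3)) * h
  funext i
  fin_cases i
  · exact h0
  · exact h1
  · exact h2

lemma deg_bind₁ (q : MvPolynomial (Fin 3) ℝ) :
    (bind₁ hopfPoly q).totalDegree ≤ 2 * q.totalDegree := by
  conv_lhs => rw [← q.support_sum_monomial_coeff]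
  rw [map_sum]
  refine le_trans (totalDegree_finset_sum _ _) (Finset.sup_le fun α hα => ?_)
  rw [bind₁_monomial]
  refine le_trans (totalDegree_mul _ _) ?_
  rw [totalDegree_C, zero_add]
  refine le_trans (le_trans (totalDegree_finset_prod _ _) ?_)
    (?_ : ∑ i ∈ α.support, 2 * α i ≤ 2 * q.totalDegree)
  · exact Finset.sum_le_sum fun i _ =>
      le_trans (totalDegree_pow _ _)
        (le_trans (Nat.mul_le_mul le_rfl (hopfPoly_deg i)) (le_of_eq (mul_comm _ 2)))
  · rw [← Finset.mul_sum]
    exact Nat.mul_le_mul le_rfl (MvPolynomial.le_totalDegree hα)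

/-- fiberwise averaging over Hopf fibers takes the restriction to `S³` of a
polynomial of degree at most `t` to the restriction to `S²` of a polynomial of degree at
most `⌊t/2⌋`, and moreover `I_π` surjects `P_t(S³)` onto `P_{⌊t/2⌋}(S²)`. -/
theorem fiberwise_average_polynomial (t : ℕ) :
    (∀ f : MvPolynomial (Fin 4) ℝ, f.totalDegree ≤ t →
      ∃ q : MvPolynomial (Fin 3) ℝ, q.totalDegree ≤ t / 2 ∧
        ∀ x : Fin 4 → ℝ, x 0 ^ 2 + x 1 ^ 2 + x 2 ^ 2 + x 3 ^ 2 = 1 →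
          (1 / (2 * π)) * ∫ θ in (0:ℝ)..(2 * π), eval (hopfRot x θ) f =
            eval (hopfMapE x) q) ∧
    (∀ q : MvPolynomial (Fin 3) ℝ, q.totalDegree ≤ t / 2 →
      ∃ f : MvPolynomial (Fin 4) ℝ, f.totalDegree ≤ t ∧
        ∀ x : Fin 4 → ℝ, x 0 ^ 2 + x 1 ^ 2 + x 2 ^ 2 + x 3 ^ 2 = 1 →
          (1 / (2 * π)) * ∫ θ in (0:ℝ)..(2 * π), eval (hopfRot x θ) f =
            eval (hopfMapE x) q) := by

  constructor
  · -- forward direction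
    intro f hf
    obtain ⟨c, hg, hv, hex⟩ := (hasExp_eval f).mono hf
    obtain ⟨Q, hQd, hQe⟩ := good_rep (hg 0) rfl
    obtain ⟨q, hqd, hqe⟩ := re_poly Q
    refine ⟨q, le_trans hqd hQd, fun x hx => ?_⟩
    have hint : ((∫ θ in (0:ℝ)..(2*π), eval (hopfRot x θ) f : ℝ) : ℂ)
        = 2 * (π:ℝ) * c 0 x := by
      have hcast : ((∫ θ in (0:ℝ)..(2*π), eval (hopfRot x θ) f : ℝ) : ℂ)
          = ∫ θ in (0:ℝ)..(2*π), ((eval (hopfRot x θ) f : ℝ) : ℂ) :=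
        (RCLike.intervalIntegral_ofReal (𝕜 := ℂ)).symm
      rw [hcast]
      simp only [hex]
      exact integral_expansion t c x
    have hre : (∫ θ in (0:ℝ)..(2*π), eval (hopfRot x θ) f) = 2 * π * (c 0 x).re := by
      have := congrArg Complex.re hint
      rw [Complex.ofReal_re] at this
      rw [this]
      have : ((2:ℂ) * (π:ℝ) * c 0 x) = (((2 * π : ℝ)) : ℂ) * c 0 x := by push_cast; ring
      rw [this, Complex.re_ofReal_mul]
    rw [hre]
    have hc0 : (c 0 x).re = eval (hopfMapE x) q := by
      rw [hQe x hx, ← hqe (hopfMapE x)]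
    rw [hc0]
    have hπ : (2 * π) ≠ 0 := by positivity
    field_simp
  · -- surjectivity
    intro q hq
    refine ⟨bind₁ hopfPoly q, le_trans (deg_bind₁ q) (by omega), fun x hx => ?_⟩
    have hconst : ∀ θ : ℝ, eval (hopfRot x θ) (bind₁ hopfPoly q) = eval (hopfMapE x) q := by
      intro θ
      have h1 : eval (hopfRot x θ) (bind₁ hopfPoly q)
          = eval (fun i => eval (hopfRot x θ) (hopfPoly i)) q :=
        eval₂Hom_bind₁ (RingHom.id ℝ) (hopfRot x θ) hopfPoly q
      rw [h1]
      have h2 : (fun i => eval (hopfRot x θ) (hopfPoly i)) = hopfMapE x := by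
        funext i
        rw [eval_hopfPoly, hopfMapE_rot]
      rw [h2]
    simp only [hconst]
    rw [intervalIntegral.integral_const]
    have hπ : π ≠ 0 := Real.pi_ne_zero
    simp only [smul_eq_mul, sub_zero]
    field_simp

end AuxHopf
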